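/- Let f : ℝ → ℂ, let s be a real number with s < 0, and let c be a real number with c > −1/s. Let F : ℂ → ℂ and assume that (i) the function t ↦ F(c + i t) is integrable on ℝ, and (ii) for every integer j ≥ 1 the inversion formula f(j^{−s}) = (1/(2π)) ∫_ℝ (j^{−s})^{−(c+it)} F(c + i t) dt holds, where (j^{−s})^{−(c+it)} = exp(s(c+it) · ln j). Then the series ∑_{j=1}^∞ f(j^{−s}) converges and ∑_{j=1}^∞ f(j^{−s}) = (1/(2π)) ∫_ℝ ζ(−s(c + i t)) F(c + i t) dt. -/

import Mathlib

open MeasureTheory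

theorem stmt1 (f : ℝ → ℂ) (s c : ℝ) (hs : s < 0) (hc : c > -1 / s)
    (F : ℂ → ℂ)
    (hInt : Integrable (fun t : ℝ => F (c + t * Complex.I)))
    (hInv : ∀ j : ℕ, 1 ≤ j → f ((j : ℝ) ^ (-s)) =
      (1 / (2 * (Real.pi : ℂ))) *
        ∫ t : ℝ, Complex.exp ((s : ℂ) * (c + t * Complex.I) * Real.log j) * F (c + t * Complex.I)) :
    HasSum (fun j : ℕ => f (((j : ℝ) + 1) ^ (-s)))
      ((1 / (2 * (Real.pi : ℂ))) *
        ∫ t : ℝ, riemannZeta (-(s : ℂ) * (c + t * Complex.I)) * F (c + t * Complex.I)) := by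
  have hsc : 1 < -(s * c) := by
    have h := (div_lt_iff_of_neg hs).mp (by linarith [hc] : -1 / s < c)
    nlinarith
  set G : ℕ → ℝ → ℂ := fun j t =>
    Complex.exp ((s : ℂ) * (c + t * Complex.I) * Real.log (j + 1)) * F (c + t * Complex.I) with hG
  have hnorm : ∀ j : ℕ, ∀ t : ℝ,
      ‖Complex.exp ((s : ℂ) * (c + t * Complex.I) * Real.log (j + 1))‖
        = ((j : ℝ) + 1) ^ (s * c) := by
    intro j t
    rw [Complex.norm_exp]
    have hre : ((s : ℂ) * (c + t * Complex.I) * Real.log (j + 1)).re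
        = s * c * Real.log (j + 1) := by
      simp [Complex.mul_re, Complex.add_re, Complex.add_im, Complex.mul_im]
    rw [hre, Real.rpow_def_of_pos (by positivity), mul_comm (Real.log _)]
  have hGint : ∀ j : ℕ, Integrable (G j) := by
    intro j
    apply hInt.bdd_mul (c := ((j : ℝ) + 1) ^ (s * c))
    · exact (Complex.continuous_exp.comp (by continuity)).aestronglyMeasurable
    · exact .of_forall fun t => le_of_eq (hnorm j t)
  have hsum : Summable fun j : ℕ => ∫ t : ℝ, ‖G j t‖ := by
    have : ∀ j : ℕ, (∫ t : ℝ, ‖G j t‖)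
        = ((j : ℝ) + 1) ^ (s * c) * ∫ t : ℝ, ‖F (c + t * Complex.I)‖ := by
      intro j
      rw [← integral_const_mul]
      congr 1 with t
      rw [hG]; simp only [norm_mul, hnorm j t]
    simp_rw [this]
    apply Summable.mul_right
    have : Summable fun j : ℕ => ((j : ℝ)) ^ (s * c) :=
      (Real.summable_nat_rpow.mpr (by linarith)).congr fun n => rfl
    have h2 := (summable_nat_add_iff 1).mpr this
    exact h2.congr fun n => by push_cast; ring_nf
  have key := hasSum_integral_of_summable_integral_norm (μ := volume) hGint hsum
  have htsum : ∀ t : ℝ, (∑' j : ℕ, G j t)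
      = riemannZeta (-(s : ℂ) * (c + t * Complex.I)) * F (c + t * Complex.I) := by
    intro t
    set w : ℂ := -(s : ℂ) * (c + t * Complex.I) with hw
    have hwre : 1 < w.re := by
      have : w.re = -(s * c) := by
        simp [hw, Complex.mul_re, Complex.add_re, Complex.add_im]
      rw [this]; exact hsc
    rw [zeta_eq_tsum_one_div_nat_add_one_cpow hwre, ← tsum_mul_right]
    congr 1 with j
    have hne : ((j : ℂ) + 1) ≠ 0 := by
      exact_mod_cast Nat.succ_ne_zero j
    rw [hG]
    congr 1
    rw [one_div, ← Complex.cpow_neg, Complex.cpow_def_of_ne_zero hne]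
    have hlog : Complex.log ((j : ℂ) + 1) = (Real.log (j + 1) : ℂ) := by
      rw [show ((j : ℂ) + 1) = ((j + 1 : ℝ) : ℂ) by push_cast; ring,
        Complex.ofReal_log (by positivity)]
    rw [hlog, hw]
    push_cast
    ring_nf
  rw [show (∫ t : ℝ, riemannZeta (-(s : ℂ) * (c + t * Complex.I)) * F (c + t * Complex.I))
      = ∫ t : ℝ, ∑' j : ℕ, G j t by exact integral_congr_ae (.of_forall fun t => (htsum t).symm)]
  have := key.mul_left (1 / (2 * (Real.pi : ℂ)))
  apply this.congr_fun
  intro j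
  have h1 := hInv (j + 1) (Nat.le_add_left 1 j)
  push_cast at h1 ⊢
  rw [h1]
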